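/- Let B be a commutative A-algebra and γ ∈ A. (i) If u : E → F is a γ-isomorphism of A-modules, then the induced map B ⊗_A E → B ⊗_A F is a γ²-isomorphism of B-modules (kernel and cokernel annihilated by the image of γ² in B). (ii) If E → F → G → 0 is a γ-exact sequence of A-modules, then the induced sequence B ⊗_A E → B ⊗_A F → B ⊗_A G → 0 of B-modules is γ²-exact. -/

import Mathlib

open scoped TensorProduct

section Aux

variable {A : Type*} [CommRing A] {B : Type*} [CommRing B] [Algebra A B]
variable {M N : Type*} [AddCommGroup M] [Module A M] [AddCommGroup N] [Module A N]

/-- If `γ` annihilates `M`, then `γ` annihilates `B ⊗[A] M`. -/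
lemma aux_smul_tensor_zero (γ : A) (h : ∀ m : M, γ • m = 0) :
    ∀ z : B ⊗[A] M, algebraMap A B γ • z = 0 := by
  intro z
  rw [algebraMap_smul]
  induction z with
  | zero => simp
  | tmul b m => rw [← TensorProduct.tmul_smul, h, TensorProduct.tmul_zero]
  | add x y hx hy => rw [smul_add, hx, hy, add_zero]

/-- If the cokernel of `f` is annihilated by `γ`, then so is the cokernel of its
base change. -/
lemma aux_gamma_surj (γ : A) (f : M →ₗ[A] N) (h : ∀ n, ∃ m, γ • n = f m) :
    ∀ w : B ⊗[A] N, ∃ z : B ⊗[A] M, algebraMap A B γ • w = LinearMap.baseChange B f z := by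
  intro w
  induction w with
  | zero => exact ⟨0, by simp⟩
  | tmul b n =>
      obtain ⟨m, hm⟩ := h n
      exact ⟨b ⊗ₜ m, by rw [algebraMap_smul, ← TensorProduct.tmul_smul, hm,
        LinearMap.baseChange_tmul]⟩
  | add x y hx hy =>
      obtain ⟨z₁, h₁⟩ := hx
      obtain ⟨z₂, h₂⟩ := hy
      exact ⟨z₁ + z₂, by rw [smul_add, h₁, h₂, map_add]⟩

/-- A `γ`-inverse for an injective map with `γ`-dense image. -/
lemma aux_gamma_inv (γ : A) (w : M →ₗ[A] N) (hinj : Function.Injective w)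
    (hsurj : ∀ n, ∃ m, γ • n = w m) :
    ∃ s : N →ₗ[A] M, s ∘ₗ w = γ • LinearMap.id := by
  choose s hs using hsurj
  refine ⟨⟨⟨s, ?_⟩, ?_⟩, ?_⟩
  · intro n n'
    apply hinj
    rw [map_add, ← hs, ← hs, ← hs, smul_add]
  · intro a n
    apply hinj
    simp only [RingHom.id_apply, map_smul]
    rw [← hs, ← hs, smul_comm]
  · ext m
    apply hinj
    simp only [LinearMap.coe_comp, Function.comp_apply, LinearMap.coe_mk, AddHom.coe_mk,
      LinearMap.smul_apply, LinearMap.id_coe, id_eq, map_smul]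
    rw [← hs]

end Aux

/-- Let `B` be a commutative `A`-algebra and `γ ∈ A`.
(i) If `u : E → F` is a `γ`-isomorphism of `A`-modules, then `B ⊗_A E → B ⊗_A F` is a
`γ²`-isomorphism of `B`-modules.
(ii) If `E → F → G → 0` is a `γ`-exact sequence of `A`-modules, then the induced sequence
`B ⊗_A E → B ⊗_A F → B ⊗_A G → 0` of `B`-modules is `γ²`-exact. -/
theorem statement3 {A : Type*} [CommRing A] {B : Type*} [CommRing B] [Algebra A B]
    (γ : A)
    {E F G : Type*} [AddCommGroup E] [Module A E] [AddCommGroup F] [Module A F]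
    [AddCommGroup G] [Module A G] :
    (∀ u : E →ₗ[A] F,
      (∀ x, u x = 0 → γ • x = 0) → (∀ y : F, ∃ x, γ • y = u x) →
      ((∀ z : B ⊗[A] E, LinearMap.baseChange B u z = 0 → algebraMap A B (γ ^ 2) • z = 0) ∧
       (∀ w : B ⊗[A] F, ∃ z, algebraMap A B (γ ^ 2) • w = LinearMap.baseChange B u z))) ∧
    (∀ (u : E →ₗ[A] F) (v : F →ₗ[A] G),
      (∀ x, v (u x) = 0) → (∀ y, v y = 0 → ∃ x, γ • y = u x) →
      (∀ z : G, ∃ y, γ • z = v y) →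
      ((∀ z : B ⊗[A] E, LinearMap.baseChange B v (LinearMap.baseChange B u z) = 0) ∧
       (∀ w : B ⊗[A] F, LinearMap.baseChange B v w = 0 →
          ∃ z, algebraMap A B (γ ^ 2) • w = LinearMap.baseChange B u z) ∧
       (∀ w : B ⊗[A] G, ∃ y, algebraMap A B (γ ^ 2) • w = LinearMap.baseChange B v y))) := by
  constructor
  · -- part (i)
    intro u h1 h2
    constructor
    · -- kernel
      intro z hz
      set K := LinearMap.ker u with hK
      set π := K.mkQ with hπ
      set ι := K.subtype with hι
      set ubar := K.liftQ u le_rfl with hubar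
      have hinj : Function.Injective ubar := by
        rw [← LinearMap.ker_eq_bot]
        exact Submodule.ker_liftQ_eq_bot _ _ _ le_rfl
      have hcomp : ubar ∘ₗ π = u := K.liftQ_mkQ u le_rfl
      have hdense : ∀ y : F, ∃ q : E ⧸ K, γ • y = ubar q := by
        intro y
        obtain ⟨x, hx⟩ := h2 y
        exact ⟨π x, by rw [hx]; exact congrFun (congrArg _ hcomp.symm) x⟩
      obtain ⟨s, hsw⟩ := aux_gamma_inv γ ubar hinj hdense
      -- image of z in B ⊗ (E ⧸ K)
      set zbar := LinearMap.baseChange B π z with hzbar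
      have h3 : LinearMap.baseChange B ubar zbar = 0 := by
        rw [hzbar, ← LinearMap.comp_apply, ← LinearMap.baseChange_comp, hcomp]
        exact hz
      have h4 : algebraMap A B γ • zbar = 0 := by
        have := congrArg (LinearMap.baseChange B s) h3
        rw [map_zero, ← LinearMap.comp_apply, ← LinearMap.baseChange_comp, hsw,
          LinearMap.baseChange_smul, LinearMap.baseChange_id, LinearMap.smul_apply,
          LinearMap.id_apply, ← algebraMap_smul (R := A) B γ zbar] at this
        exact this
      have h5 : LinearMap.baseChange B π (algebraMap A B γ • z) = 0 := by
        rw [map_smul]; exact h4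
      have h6 : LinearMap.lTensor B π (algebraMap A B γ • z) = 0 := h5
      rw [← LinearMap.mem_ker, lTensor_mkQ] at h6
      obtain ⟨t, ht⟩ := h6
      have h7 : algebraMap A B γ • t = 0 := by
        apply aux_smul_tensor_zero γ
        intro m
        have : γ • (m : E) = 0 := h1 m m.2
        exact Subtype.ext (by simpa using this)
      have h8 : LinearMap.baseChange B ι t = algebraMap A B γ • z := ht
      rw [pow_two, map_mul, mul_smul, ← h8, ← map_smul, h7, map_zero]
    · -- cokernel
      intro w
      obtain ⟨z, hz⟩ := aux_gamma_surj γ u h2 w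
      exact ⟨algebraMap A B γ • z, by rw [pow_two, map_mul, mul_smul, hz, map_smul]⟩
  · -- part (ii)
    intro u v h0 h1 h2
    refine ⟨?_, ?_, ?_⟩
    · intro z
      have hvu : v ∘ₗ u = 0 := by ext x; exact h0 x
      rw [← LinearMap.comp_apply, ← LinearMap.baseChange_comp, hvu,
        LinearMap.baseChange_zero, LinearMap.zero_apply]
    · intro w hw
      set K := LinearMap.ker v with hK
      set π := K.mkQ with hπ
      set ι := K.subtype with hι
      set vbar := K.liftQ v le_rfl with hvbar
      have hinj : Function.Injective vbar := by
        rw [← LinearMap.ker_eq_bot]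
        exact Submodule.ker_liftQ_eq_bot _ _ _ le_rfl
      have hcomp : vbar ∘ₗ π = v := K.liftQ_mkQ v le_rfl
      have hdense : ∀ g : G, ∃ q : F ⧸ K, γ • g = vbar q := by
        intro g
        obtain ⟨y, hy⟩ := h2 g
        exact ⟨π y, by rw [hy]; exact congrFun (congrArg _ hcomp.symm) y⟩
      obtain ⟨s, hsw⟩ := aux_gamma_inv γ vbar hinj hdense
      set wbar := LinearMap.baseChange B π w with hwbar
      have h3 : LinearMap.baseChange B vbar wbar = 0 := by
        rw [hwbar, ← LinearMap.comp_apply, ← LinearMap.baseChange_comp, hcomp]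
        exact hw
      have h4 : algebraMap A B γ • wbar = 0 := by
        have := congrArg (LinearMap.baseChange B s) h3
        rw [map_zero, ← LinearMap.comp_apply, ← LinearMap.baseChange_comp, hsw,
          LinearMap.baseChange_smul, LinearMap.baseChange_id, LinearMap.smul_apply,
          LinearMap.id_apply, ← algebraMap_smul (R := A) B γ wbar] at this
        exact this
      have h5 : LinearMap.lTensor B π (algebraMap A B γ • w) = 0 := by
        show LinearMap.baseChange B π (algebraMap A B γ • w) = 0
        rw [map_smul]; exact h4
      rw [← LinearMap.mem_ker, lTensor_mkQ] at h5
      obtain ⟨t, ht⟩ := h5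
      -- corestriction of u to K
      set u' : E →ₗ[A] K := u.codRestrict K (fun x => h0 x) with hu'
      have hu'surj : ∀ k : K, ∃ x, γ • k = u' x := by
        intro k
        obtain ⟨x, hx⟩ := h1 (k : F) k.2
        exact ⟨x, Subtype.ext hx⟩
      obtain ⟨z, hz⟩ := aux_gamma_surj γ u' hu'surj t
      refine ⟨z, ?_⟩
      have h8 : LinearMap.baseChange B ι t = algebraMap A B γ • w := ht
      have h9 : ι ∘ₗ u' = u := LinearMap.subtype_comp_codRestrict u K (fun x => h0 x)
      rw [pow_two, map_mul, mul_smul, ← h8, ← map_smul, hz, ← LinearMap.comp_apply, ← LinearMap.baseChange_comp, h9]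
    · intro w
      obtain ⟨y, hy⟩ := aux_gamma_surj γ v h2 w
      exact ⟨algebraMap A B γ • y, by rw [pow_two, map_mul, mul_smul, hy, map_smul]⟩
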